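/- Every metric space (M,d) whose diameter is at most 2 (i.e. d(x,y) ≤ 2 for all x,y ∈ M) can be isometrically embedded into the unit sphere of a Banach space of continuous functions on a compact Hausdorff space: there exist a compact Hausdorff space K and a map Ψ : M → C(K) such that ‖Ψ(x)‖∞ = 1 for every x ∈ M and ‖Ψ(x) − Ψ(y)‖∞ = d(x,y) for all x, y ∈ M. -/
import Mathlib


universe u

/- STATEMENT 1: Every metric space `M` of diameter at most `2` embeds isometrically
into the unit sphere of a Banach space `C(K)` of continuous real-valued functions
on a compact Hausdorff space `K`. -/
theorem stmt1 {M : Type u} [MetricSpace M] (h2 : ∀ x y : M, dist x y ≤ 2) :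
    ∃ (K : Type u) (_ : TopologicalSpace K) (_ : CompactSpace K) (_ : T2Space K)
      (Ψ : M → C(K, ℝ)),
      (∀ x : M, ‖Ψ x‖ = 1) ∧ (∀ x y : M, ‖Ψ x - Ψ y‖ = dist x y) := by
  classical
  haveI : CompactSpace (Set.Icc (-1 : ℝ) 1) := isCompact_iff_compactSpace.mp isCompact_Icc
  let F : M → M → Set.Icc (-1 : ℝ) 1 := fun x y => ⟨1 - dist x y, by
    constructor
    · linarith [h2 x y]
    · linarith [dist_nonneg (x := x) (y := y)]⟩
  have hFc : ∀ x, Continuous (F x) := fun x =>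
    Continuous.subtype_mk (by fun_prop) _
  let G : M → StoneCech M → Set.Icc (-1 : ℝ) 1 := fun x => stoneCechExtend (hFc x)
  have hG : ∀ x y, G x (stoneCechUnit y) = F x y := fun x y =>
    congrFun (stoneCechExtend_extends (hFc x)) y
  let Ψ : M → C(StoneCech M, ℝ) := fun x =>
    ⟨fun k => (G x k : ℝ), continuous_subtype_val.comp (continuous_stoneCechExtend (hFc x))⟩
  refine ⟨StoneCech M, inferInstance, inferInstance, inferInstance, Ψ, ?_, ?_⟩
  · intro x
    apply le_antisymm
    · rw [ContinuousMap.norm_le _ zero_le_one]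
      intro k
      have h := (G x k).2
      rw [Real.norm_eq_abs, abs_le]
      exact ⟨h.1, h.2⟩
    · have h1 : (Ψ x) (stoneCechUnit x) = 1 := by
        show ((G x (stoneCechUnit x) : ℝ)) = 1
        rw [hG]; simp [F]
      calc (1:ℝ) = ‖(Ψ x) (stoneCechUnit x)‖ := by rw [h1]; simp
        _ ≤ ‖Ψ x‖ := ContinuousMap.norm_coe_le_norm _ _
  · intro x y
    have key : ∀ z, (Ψ x - Ψ y) (stoneCechUnit z) = dist y z - dist x z := by
      intro z
      simp only [ContinuousMap.sub_apply]
      show ((G x (stoneCechUnit z) : ℝ)) - ((G y (stoneCechUnit z)):ℝ) = _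
      rw [hG, hG]; simp [F]
    apply le_antisymm
    · rw [ContinuousMap.norm_le _ dist_nonneg]
      intro k
      have hc : IsClosed {k : StoneCech M | ‖(Ψ x - Ψ y) k‖ ≤ dist x y} :=
        isClosed_le ((Ψ x - Ψ y).continuous.norm) continuous_const
      refine denseRange_stoneCechUnit.induction_on k hc ?_
      intro z
      show ‖(Ψ x - Ψ y) (stoneCechUnit z)‖ ≤ dist x y
      rw [key z, Real.norm_eq_abs]
      calc |dist y z - dist x z| ≤ dist y x := abs_dist_sub_le y x z
        _ = dist x y := dist_comm y x
    · calc dist x y = ‖(Ψ x - Ψ y) (stoneCechUnit x)‖ := by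
            rw [key x]; simp [Real.norm_eq_abs, abs_of_nonneg dist_nonneg, dist_comm y x]
        _ ≤ ‖Ψ x - Ψ y‖ := ContinuousMap.norm_coe_le_norm _ _
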